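/- Let X be a finite quandle such that Inn(X) acts primitively on X. Then X is a simple quandle: every surjective quandle homomorphism from X to a quandle Q with more than one element is injective. -/

import Mathlib

/-- The inner automorphism group of a quandle: the subgroup of permutations
generated by the maps `φ x : y ↦ x ◃ y`. -/
def Inn (X : Type*) [Quandle X] : Subgroup (Equiv.Perm X) :=
  Subgroup.closure (Set.range (fun x : X => Rack.act' x))

theorem stmt3 {X : Type*} [Quandle X] [Fintype X]
    (htrans : ∀ x y : X, ∃ g ∈ Inn X, g x = y)
    (hblocks : ∀ B : Set X,
      (∀ g ∈ Inn X, (g : Equiv.Perm X) '' B = B ∨ Disjoint ((g : Equiv.Perm X) '' B) B) →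
      B.Subsingleton ∨ B = Set.univ) :
    ∀ (Q : Type*) (_ : Quandle Q) (p : X → Q), Function.Surjective p →
      (∀ a b : X, p (Shelf.act a b) = Shelf.act (p a) (p b)) → Nontrivial Q →
      Function.Injective p := by
  intro Q _ p hsurj hhom hnt a b hab
  -- every g in Inn X descends to a permutation of Q
  have key : ∀ g ∈ Inn X, ∃ σ : Equiv.Perm Q, ∀ y : X, p (g y) = σ (p y) := by
    intro g hg
    refine Subgroup.closure_induction ?_ ?_ ?_ ?_ hg
    · rintro _ ⟨x, rfl⟩
      exact ⟨Rack.act' (p x), fun y => by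
        simp [Rack.act'_apply, hhom]⟩
    · exact ⟨1, fun y => rfl⟩
    · rintro g h _ _ ⟨σ, hσ⟩ ⟨τ, hτ⟩
      exact ⟨σ * τ, fun y => by simp [Equiv.Perm.mul_apply, hσ, hτ]⟩
    · rintro g _ ⟨σ, hσ⟩
      refine ⟨σ⁻¹, fun y => ?_⟩
      have := hσ (g⁻¹ y)
      simp only [← Equiv.Perm.mul_apply, mul_inv_cancel, Equiv.Perm.one_apply] at this
      rw [this, Equiv.Perm.eq_inv_iff_eq]
  -- the fiber of p a is a block
  set B : Set X := p ⁻¹' {p a} with hB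
  have hblock : ∀ g ∈ Inn X, (g : Equiv.Perm X) '' B = B ∨
      Disjoint ((g : Equiv.Perm X) '' B) B := by
    intro g hg
    obtain ⟨σ, hσ⟩ := key g hg
    have himg : (g : Equiv.Perm X) '' B = p ⁻¹' {σ (p a)} := by
      ext y
      constructor
      · rintro ⟨z, hz, rfl⟩
        simp only [hB, Set.mem_preimage, Set.mem_singleton_iff] at hz ⊢
        rw [hσ, hz]
      · intro hy
        refine ⟨g⁻¹ y, ?_, by simp⟩
        simp only [hB, Set.mem_preimage, Set.mem_singleton_iff] at hy ⊢
        have := hσ (g⁻¹ y)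
        simp only [← Equiv.Perm.mul_apply, mul_inv_cancel, Equiv.Perm.one_apply] at this
        rw [← σ.injective.eq_iff, ← this, hy]
    by_cases h : σ (p a) = p a
    · left; rw [himg, h]
    · right
      rw [himg]
      rw [Set.disjoint_left]
      intro y hy hy'
      simp only [hB, Set.mem_preimage, Set.mem_singleton_iff] at hy hy'
      exact h (hy ▸ hy')
  rcases hblocks B hblock with hsub | huniv
  · exact hsub (show a ∈ B by simp [hB]) (show b ∈ B by simp [hB, ← hab])
  · -- p is constant, contradicting surjectivity + nontriviality
    exfalso
    obtain ⟨q1, q2, hq⟩ := hnt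
    have hc : ∀ x : X, p x = p a := fun x => by
      have : x ∈ B := huniv ▸ Set.mem_univ x
      simpa [hB] using this
    obtain ⟨x1, hx1⟩ := hsurj q1
    obtain ⟨x2, hx2⟩ := hsurj q2
    exact hq (by rw [← hx1, ← hx2, hc x1, hc x2])
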